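/- Let f(x) = K·((1−r²)/(1−r^{2x}))^{1/5}·(τ/(T−x))^{1/5} + τ/(T−x) on the real interval [1, T−1], with constants K > 0, τ > 0, T > 2, 1/2 ≤ r < 1. If f'(1) ≥ 0 then f is minimized over [1, T−1] at x = 1. -/

import Mathlib

set_option maxHeartbeats 1000000

theorem stmt_14 (K τ T r : ℝ) (hK : 0 < K) (hτ : 0 < τ) (hT : 2 < T) (hr0 : 1 / 2 ≤ r)
    (hr1 : r < 1) (f : ℝ → ℝ)
    (hf : ∀ x : ℝ, f x =
      K * ((1 - r ^ 2) / (1 - r ^ (2 * x))) ^ ((1 : ℝ) / 5) * (τ / (T - x)) ^ ((1 : ℝ) / 5) +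
        τ / (T - x))
    (hderiv : 0 ≤ deriv f 1) :
    ∀ x ∈ Set.Icc (1 : ℝ) (T - 1), f 1 ≤ f x := by
  have hr : (0:ℝ) < r := by linarith
  have hL : Real.log r < 0 := Real.log_neg hr hr1
  have hr2 : (0:ℝ) < 1 - r ^ 2 := by nlinarith
  set c : ℝ := K * ((1 - r ^ 2) * τ) ^ ((1:ℝ)/5) with hcDef
  have hcpos : 0 < c := mul_pos hK (Real.rpow_pos_of_pos (by positivity) _)
  set v : ℝ → ℝ := fun x => T - x with hvDef
  set u : ℝ → ℝ := fun x => 1 - r ^ (2 * x) with huDef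
  set p : ℝ → ℝ := fun x => u x * v x with hpDef
  set F : ℝ → ℝ := fun x => c * p x ^ (-(1:ℝ)/5) + τ * (v x)⁻¹ with hFDef
  set U' : ℝ → ℝ := fun x => -(r ^ (2*x) * Real.log r * 2) with hU'Def
  set U'' : ℝ → ℝ := fun x => -(r ^ (2*x) * Real.log r * 2 * Real.log r * 2) with hU''Def
  set P' : ℝ → ℝ := fun x => U' x * v x + u x * (-1) with hP'Def
  set P'' : ℝ → ℝ := fun x => (U'' x * v x + U' x * (-1)) + U' x * (-1) with hP''Def
  set F' : ℝ → ℝ := fun x =>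
    c * (P' x * (-(1:ℝ)/5) * p x ^ (-(1:ℝ)/5 - 1)) + τ * (1 / v x ^ 2) with hF'Def
  set F'' : ℝ → ℝ := fun x =>
    c * ((6:ℝ)/25 * (p x ^ (-(1:ℝ)/5 - 1 - 1) * P' x ^ 2)
        + (1:ℝ)/5 * (p x ^ (-(1:ℝ)/5 - 1) * (-(P'' x)))) + 2 * τ / v x ^ 3 with hF''Def
  have hvpos : ∀ x ∈ Set.Ioo (0:ℝ) T, 0 < v x := by
    intro x hx; rw [hvDef]; simp only; linarith [hx.2]
  have hupos : ∀ x ∈ Set.Ioo (0:ℝ) T, 0 < u x := by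
    intro x hx
    have : r ^ (2*x) < 1 := Real.rpow_lt_one hr.le hr1 (by linarith [hx.1])
    rw [huDef]; simp only; linarith
  have hppos : ∀ x ∈ Set.Ioo (0:ℝ) T, 0 < p x := fun x hx =>
    mul_pos (hupos x hx) (hvpos x hx)
  -- f = F on Ioo 0 T
  have hfF : ∀ x ∈ Set.Ioo (0:ℝ) T, f x = F x := by
    intro x hx
    have hux := hupos x hx
    have hvx := hvpos x hx
    have e1 : p x ^ (-(1:ℝ)/5)
        = ((1 - r ^ (2*x)) ^ ((1:ℝ)/5))⁻¹ * ((T - x) ^ ((1:ℝ)/5))⁻¹ := by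
      rw [show (-(1:ℝ)/5) = -((1:ℝ)/5) by norm_num, Real.rpow_neg (le_of_lt (hppos x hx)),
        show p x = (1 - r ^ (2*x)) * (T - x) from rfl,
        Real.mul_rpow hux.le hvx.le, mul_inv]
    have e2 : ((1 - r ^ 2) / (1 - r ^ (2*x))) ^ ((1:ℝ)/5)
        = (1 - r ^ 2) ^ ((1:ℝ)/5) / (1 - r ^ (2*x)) ^ ((1:ℝ)/5) :=
      Real.div_rpow hr2.le hux.le _
    have e3 : (τ / (T - x)) ^ ((1:ℝ)/5) = τ ^ ((1:ℝ)/5) / (T - x) ^ ((1:ℝ)/5) :=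
      Real.div_rpow hτ.le hvx.le _
    have e4 : ((1 - r ^ 2) * τ) ^ ((1:ℝ)/5) = (1 - r ^ 2) ^ ((1:ℝ)/5) * τ ^ ((1:ℝ)/5) :=
      Real.mul_rpow hr2.le hτ.le
    rw [hf x, e2, e3]
    show _ = c * p x ^ (-(1:ℝ)/5) + τ * (v x)⁻¹
    rw [e1, hcDef, e4, show v x = T - x from rfl]
    ring
  -- derivatives
  have hsderiv : ∀ x : ℝ, HasDerivAt (fun y : ℝ => r ^ (2*y)) (r ^ (2*x) * Real.log r * 2) x := by
    intro x
    have h2x : HasDerivAt (fun y : ℝ => 2 * y) 2 x := by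
      simpa using (hasDerivAt_id x).const_mul 2
    exact ((Real.hasStrictDerivAt_const_rpow hr (2*x)).hasDerivAt).comp x h2x
  have hv' : ∀ x : ℝ, HasDerivAt v (-1) x := by
    intro x
    rw [hvDef]
    exact (hasDerivAt_id x).const_sub T
  have hu' : ∀ x : ℝ, HasDerivAt u (U' x) x := by
    intro x
    rw [huDef, hU'Def]
    exact (hsderiv x).const_sub 1
  have hp' : ∀ x : ℝ, HasDerivAt p (P' x) x := by
    intro x
    rw [hpDef, hP'Def]
    exact (hu' x).mul (hv' x)
  have hU'd : ∀ x : ℝ, HasDerivAt U' (U'' x) x := by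
    intro x
    rw [hU'Def, hU''Def]
    exact (((hsderiv x).mul_const (Real.log r)).mul_const 2).neg
  have hP'd : ∀ x : ℝ, HasDerivAt P' (P'' x) x := by
    intro x
    rw [hP'Def, hP''Def]
    exact ((hU'd x).mul (hv' x)).add ((hu' x).mul_const (-1))
  have hFd : ∀ x ∈ Set.Ioo (0:ℝ) T, HasDerivAt F (F' x) x := by
    intro x hx
    have hpx := hppos x hx
    have hvx := hvpos x hx
    have h1 : HasDerivAt (fun y => p y ^ (-(1:ℝ)/5))
        (P' x * (-(1:ℝ)/5) * p x ^ (-(1:ℝ)/5 - 1)) x :=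
      (hp' x).rpow_const (Or.inl hpx.ne')
    have h2 : HasDerivAt (fun y => (v y)⁻¹) (-(-1) / v x ^ 2) x := (hv' x).inv hvx.ne'
    have h := (h1.const_mul c).add (h2.const_mul τ)
    rw [hFDef, hF'Def]
    refine h.congr_deriv ?_
    ring
  have hF'd : ∀ x ∈ Set.Ioo (0:ℝ) T, HasDerivAt F' (F'' x) x := by
    intro x hx
    have hpx := hppos x hx
    have hvx := hvpos x hx
    have h1 : HasDerivAt (fun y => p y ^ (-(1:ℝ)/5 - 1))
        (P' x * (-(1:ℝ)/5 - 1) * p x ^ (-(1:ℝ)/5 - 1 - 1)) x :=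
      (hp' x).rpow_const (Or.inl hpx.ne')
    have h2 : HasDerivAt (fun y => P' y * (-(1:ℝ)/5) * p y ^ (-(1:ℝ)/5 - 1))
        ((P'' x * (-(1:ℝ)/5)) * p x ^ (-(1:ℝ)/5 - 1)
          + (P' x * (-(1:ℝ)/5)) * (P' x * (-(1:ℝ)/5 - 1) * p x ^ (-(1:ℝ)/5 - 1 - 1))) x :=
      ((hP'd x).mul_const (-(1:ℝ)/5)).mul h1
    have hv2 : HasDerivAt (fun y => v y ^ 2) ((2:ℕ) * v x ^ (2-1) * (-1)) x := (hv' x).pow 2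
    have h3 : HasDerivAt (fun y => (1:ℝ) / v y ^ 2)
        ((0 * v x ^ 2 - 1 * ((2:ℕ) * v x ^ (2-1) * (-1))) / (v x ^ 2) ^ 2) x :=
      (hasDerivAt_const x (1:ℝ)).div hv2 (by positivity)
    have h := (h2.const_mul c).add (h3.const_mul τ)
    rw [hF'Def, hF''Def]
    refine h.congr_deriv ?_
    have h3 : (v x) ≠ 0 := hvx.ne'
    field_simp
    ring
  -- second derivative nonneg
  have hF''nonneg : ∀ x ∈ Set.Ioo (0:ℝ) T, 0 ≤ F'' x := by
    intro x hx
    have hpx := hppos x hx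
    have hvx := hvpos x hx
    have hs : 0 < r ^ (2*x) := Real.rpow_pos_of_pos hr _
    have hU'pos : 0 < U' x := by rw [hU'Def]; simp only; nlinarith
    have hLL : 0 < Real.log r * Real.log r := mul_pos_of_neg_of_neg hL hL
    have hU''neg : U'' x < 0 := by rw [hU''Def]; simp only; nlinarith
    have hP''neg : -(P'' x) ≥ 0 := by
      rw [hP''Def]; simp only; nlinarith
    have t1 : 0 ≤ (6:ℝ)/25 * (p x ^ (-(1:ℝ)/5 - 1 - 1) * P' x ^ 2) := by positivity
    have t2 : 0 ≤ (1:ℝ)/5 * (p x ^ (-(1:ℝ)/5 - 1) * (-(P'' x))) := by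
      have hq := Real.rpow_pos_of_pos hpx (-(1:ℝ)/5 - 1)
      exact mul_nonneg (by norm_num) (mul_nonneg hq.le hP''neg)
    have t3 : 0 ≤ 2 * τ / v x ^ 3 := by positivity
    rw [hF''Def]
    have : 0 ≤ c * ((6:ℝ)/25 * (p x ^ (-(1:ℝ)/5 - 1 - 1) * P' x ^ 2)
        + (1:ℝ)/5 * (p x ^ (-(1:ℝ)/5 - 1) * (-(P'' x)))) :=
      mul_nonneg hcpos.le (add_nonneg t1 t2)
    simp only
    linarith
  -- F' monotone on Ioo 0 T
  have hmonoF' : MonotoneOn F' (Set.Ioo (0:ℝ) T) := by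
    apply monotoneOn_of_deriv_nonneg (convex_Ioo (0:ℝ) T)
    · exact fun x hx => (hF'd x hx).continuousAt.continuousWithinAt
    · intro x hx
      rw [interior_Ioo] at hx
      exact (hF'd x hx).differentiableAt.differentiableWithinAt
    · intro x hx
      rw [interior_Ioo] at hx
      rw [(hF'd x hx).deriv]
      exact hF''nonneg x hx
  have h1O : (1:ℝ) ∈ Set.Ioo (0:ℝ) T := ⟨one_pos, by linarith⟩
  have heq : f =ᶠ[nhds 1] F := by
    filter_upwards [isOpen_Ioo.mem_nhds h1O] with y hy using hfF y hy
  have hF'1 : 0 ≤ F' 1 := by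
    have hd1 : deriv f 1 = F' 1 := by rw [heq.deriv_eq, (hFd 1 h1O).deriv]
    rwa [hd1] at hderiv
  have hsub : Set.Icc (1:ℝ) (T-1) ⊆ Set.Ioo (0:ℝ) T := fun y hy =>
    ⟨by linarith [hy.1], by linarith [hy.2]⟩
  have hmonoF : MonotoneOn F (Set.Icc (1:ℝ) (T-1)) := by
    apply monotoneOn_of_deriv_nonneg (convex_Icc (1:ℝ) (T-1))
    · exact fun y hy => (hFd y (hsub hy)).continuousAt.continuousWithinAt
    · intro y hy
      rw [interior_Icc] at hy
      exact (hFd y (hsub (Set.Ioo_subset_Icc_self hy))).differentiableAt.differentiableWithinAt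
    · intro y hy
      rw [interior_Icc] at hy
      have hyO : y ∈ Set.Ioo (0:ℝ) T := hsub (Set.Ioo_subset_Icc_self hy)
      rw [(hFd y hyO).deriv]
      exact le_trans hF'1 (hmonoF' h1O hyO hy.1.le)
  intro x hx
  have h1m : (1:ℝ) ∈ Set.Icc (1:ℝ) (T-1) := ⟨le_refl _, by linarith⟩
  rw [hfF 1 (hsub h1m), hfF x (hsub hx)]
  exact hmonoF h1m hx hx.1
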